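/- Let H be a bounded self-adjoint operator on a complex Hilbert space 𝓗, let Q be a bounded operator on 𝓗, let λ ∈ ℝ, and let P be the orthogonal projection onto the eigenspace ker(H − λ·I). Then P · (H − i)⁻¹ [H, Q] (H + i)⁻¹ · P = 0. -/

import Mathlib

open ContinuousLinearMap

variable {𝓗 : Type*} [NormedAddCommGroup 𝓗] [InnerProductSpace ℂ 𝓗] [CompleteSpace 𝓗]

private lemma isUnit_sub_smul_one (H : 𝓗 →L[ℂ] 𝓗) (hH : IsSelfAdjoint H) (z : ℂ)
    (hz : z.im ≠ 0) : IsUnit (H - z • (1 : 𝓗 →L[ℂ] 𝓗)) := by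
  have h : z ∉ spectrum ℂ H := fun hmem => by
    have := hH.mem_spectrum_eq_re hmem
    rw [this] at hz
    simp at hz
  rw [spectrum.notMem_iff] at h
  have : algebraMap ℂ (𝓗 →L[ℂ] 𝓗) z - H = -(H - z • 1) := by
    rw [Algebra.algebraMap_eq_smul_one, neg_sub]
  rw [this] at h
  simpa using h.neg

theorem eigenprojection_annihilates_commutator
    (H Q P : 𝓗 →L[ℂ] 𝓗) (hH : IsSelfAdjoint H) (lam : ℝ)
    (hP₁ : IsIdempotentElem P) (hP₂ : IsSelfAdjoint P)
    (hP₃ : LinearMap.range (P : 𝓗 →ₗ[ℂ] 𝓗) = LinearMap.ker (↑(H - (lam : ℂ) • (1 : 𝓗 →L[ℂ] 𝓗)) : 𝓗 →ₗ[ℂ] 𝓗)) :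
    P * (Ring.inverse (H - Complex.I • (1 : 𝓗 →L[ℂ] 𝓗)) * (H * Q - Q * H) *
        Ring.inverse (H + Complex.I • (1 : 𝓗 →L[ℂ] 𝓗))) * P = 0 := by
  have hU₁ : IsUnit (H - Complex.I • (1 : 𝓗 →L[ℂ] 𝓗)) :=
    isUnit_sub_smul_one H hH Complex.I (by simp)
  have hU₂ : IsUnit (H + Complex.I • (1 : 𝓗 →L[ℂ] 𝓗)) := by
    have := isUnit_sub_smul_one H hH (-Complex.I) (by simp)
    simpa [sub_neg_eq_add] using this
  -- H P = λ P
  have hHP : H * P = (lam : ℂ) • P := by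
    ext x
    have hx : P x ∈ LinearMap.ker (↑(H - (lam : ℂ) • (1 : 𝓗 →L[ℂ] 𝓗)) : 𝓗 →ₗ[ℂ] 𝓗) := by
      rw [← hP₃]; exact ⟨x, rfl⟩
    have := LinearMap.mem_ker.mp hx
    simp only [ContinuousLinearMap.coe_coe, sub_apply, smul_apply, one_apply, sub_eq_zero] at this
    simpa using this
  -- P H = λ P
  have hPH : P * H = (lam : ℂ) • P := by
    have := congrArg star hHP
    rw [star_mul, hH.star_eq, hP₂.star_eq, star_smul] at this
    simpa [hP₂.star_eq] using this
  -- P * inv₁ = (λ - i)⁻¹ • P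
  have h₁ : P * Ring.inverse (H - Complex.I • (1 : 𝓗 →L[ℂ] 𝓗))
      = ((lam : ℂ) - Complex.I)⁻¹ • P := by
    have hne : ((lam : ℂ) - Complex.I) ≠ 0 := by
      intro h
      have := congrArg Complex.im h
      simp at this
    have key : P * (H - Complex.I • 1) = ((lam : ℂ) - Complex.I) • P := by
      rw [mul_sub, hPH, mul_smul_comm, mul_one, sub_smul]
    have hrep : P = ((lam : ℂ) - Complex.I)⁻¹ • (P * (H - Complex.I • 1)) := by
      rw [key, smul_smul, inv_mul_cancel₀ hne, one_smul]
    calc P * Ring.inverse (H - Complex.I • (1 : 𝓗 →L[ℂ] 𝓗))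
        = (((lam : ℂ) - Complex.I)⁻¹ • (P * (H - Complex.I • 1))) *
          Ring.inverse (H - Complex.I • (1 : 𝓗 →L[ℂ] 𝓗)) := by rw [← hrep]
      _ = ((lam : ℂ) - Complex.I)⁻¹ • P := by
          rw [smul_mul_assoc, mul_assoc, Ring.mul_inverse_cancel _ hU₁, mul_one]
  -- inv₂ * P = (λ + i)⁻¹ • P
  have h₂ : Ring.inverse (H + Complex.I • (1 : 𝓗 →L[ℂ] 𝓗)) * P
      = ((lam : ℂ) + Complex.I)⁻¹ • P := by
    have hne : ((lam : ℂ) + Complex.I) ≠ 0 := by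
      intro h
      have := congrArg Complex.im h
      simp at this
    have key : (H + Complex.I • 1) * P = ((lam : ℂ) + Complex.I) • P := by
      rw [add_mul, hHP, smul_mul_assoc, one_mul, add_smul]
    have hrep : P = ((lam : ℂ) + Complex.I)⁻¹ • ((H + Complex.I • 1) * P) := by
      rw [key, smul_smul, inv_mul_cancel₀ hne, one_smul]
    calc Ring.inverse (H + Complex.I • (1 : 𝓗 →L[ℂ] 𝓗)) * P
        = Ring.inverse (H + Complex.I • (1 : 𝓗 →L[ℂ] 𝓗)) *
          (((lam : ℂ) + Complex.I)⁻¹ • ((H + Complex.I • 1) * P)) := by rw [← hrep]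
      _ = ((lam : ℂ) + Complex.I)⁻¹ • P := by
          rw [mul_smul_comm, ← mul_assoc, Ring.inverse_mul_cancel _ hU₂, one_mul]
  -- middle
  have hmid : P * (H * Q - Q * H) * P = 0 := by
    have hre : P * (H * Q - Q * H) * P = P * H * (Q * P) - P * Q * (H * P) := by
      noncomm_ring
    rw [hre, hPH, hHP, smul_mul_assoc, mul_smul_comm, mul_assoc, sub_self]
  calc P * (Ring.inverse (H - Complex.I • (1 : 𝓗 →L[ℂ] 𝓗)) * (H * Q - Q * H) *
        Ring.inverse (H + Complex.I • (1 : 𝓗 →L[ℂ] 𝓗))) * P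
      = (P * Ring.inverse (H - Complex.I • (1 : 𝓗 →L[ℂ] 𝓗))) * (H * Q - Q * H) *
        (Ring.inverse (H + Complex.I • (1 : 𝓗 →L[ℂ] 𝓗)) * P) := by
        simp only [mul_assoc]
    _ = (((lam : ℂ) - Complex.I)⁻¹ * ((lam : ℂ) + Complex.I)⁻¹) •
        (P * (H * Q - Q * H) * P) := by
        rw [h₁, h₂, smul_mul_assoc, smul_mul_assoc, mul_smul_comm, mul_assoc, smul_smul]
    _ = 0 := by rw [hmid, smul_zero]
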